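/- Let φ be the N(0,σ²) density. For α > 0 and t ∈ [0, 2α], the function W(α, t) = 1 − (∫_{α−t}^{α} φ)/(∫_{−α}^{α} φ) is monotone nondecreasing in α (for α ≥ t/2). -/
import Mathlib


open MeasureTheory Real

/-- With `φ` the `N(0,σ²)` density, `W(α,t) = 1 − (∫_{α−t}^{α} φ)/(∫_{−α}^{α} φ)`
is monotone nondecreasing in `α` on `{α : α > 0, α ≥ t/2}`. -/
theorem W_monotone_in_alpha (σ t : ℝ) (hσ : 0 < σ) (ht : 0 ≤ t) :
    ∀ α₁ α₂ : ℝ, 0 < α₁ → t / 2 ≤ α₁ → α₁ ≤ α₂ →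
      1 - (∫ x in (α₁ - t)..α₁,
            (Real.sqrt (2 * π * σ ^ 2))⁻¹ * Real.exp (-x ^ 2 / (2 * σ ^ 2))) /
          (∫ x in (-α₁)..α₁,
            (Real.sqrt (2 * π * σ ^ 2))⁻¹ * Real.exp (-x ^ 2 / (2 * σ ^ 2))) ≤
      1 - (∫ x in (α₂ - t)..α₂,
            (Real.sqrt (2 * π * σ ^ 2))⁻¹ * Real.exp (-x ^ 2 / (2 * σ ^ 2))) /
          (∫ x in (-α₂)..α₂,
            (Real.sqrt (2 * π * σ ^ 2))⁻¹ * Real.exp (-x ^ 2 / (2 * σ ^ 2))) := by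
  intro α₁ α₂ hα₁ ht2 h12
  set f : ℝ → ℝ := fun x => (Real.sqrt (2 * π * σ ^ 2))⁻¹ * Real.exp (-x ^ 2 / (2 * σ ^ 2))
    with hfdef
  have hcont : Continuous f := by fun_prop
  have hsq : (0:ℝ) < 2 * π * σ ^ 2 := by positivity
  have hpos : ∀ x, 0 < f x := by
    intro x
    have : 0 < Real.sqrt (2 * π * σ ^ 2) := Real.sqrt_pos.mpr hsq
    positivity
  have hint : ∀ a b : ℝ, IntervalIntegrable f volume a b :=
    fun a b => hcont.intervalIntegrable a b
  -- denominator positivity and monotonicity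
  have hD1pos : 0 < ∫ x in (-α₁)..α₁, f x :=
    intervalIntegral.intervalIntegral_pos_of_pos_on (hint _ _)
      (fun x _ => hpos x) (by linarith)
  have hD12 : (∫ x in (-α₁)..α₁, f x) ≤ ∫ x in (-α₂)..α₂, f x :=
    intervalIntegral.integral_mono_interval (by linarith) (by linarith) h12
      (Filter.Eventually.of_forall fun x => (hpos x).le) (hint _ _)
  -- numerator nonnegativity
  have hN1nonneg : 0 ≤ ∫ x in (α₁ - t)..α₁, f x :=
    intervalIntegral.integral_nonneg (by linarith) (fun x _ => (hpos x).le)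
  -- numerator monotonicity (nonincreasing)
  have hshift : (∫ x in α₁..α₂, f (x - t)) = ∫ x in (α₁ - t)..(α₂ - t), f x :=
    intervalIntegral.integral_comp_sub_right f t
  have hptwise : ∀ x ∈ Set.Icc α₁ α₂, f x ≤ f (x - t) := by
    intro x hx
    have hx1 : α₁ ≤ x := hx.1
    have hsqle : (x - t) ^ 2 ≤ x ^ 2 := by nlinarith
    have hσ2 : (0:ℝ) < 2 * σ ^ 2 := by positivity
    have hexp : Real.exp (-x ^ 2 / (2 * σ ^ 2)) ≤ Real.exp (-(x - t) ^ 2 / (2 * σ ^ 2)) := by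
      apply Real.exp_le_exp.mpr
      apply div_le_div_of_nonneg_right ?_ hσ2.le
      linarith
    have hs : 0 < (Real.sqrt (2 * π * σ ^ 2))⁻¹ := by
      have : 0 < Real.sqrt (2 * π * σ ^ 2) := Real.sqrt_pos.mpr hsq
      positivity
    simpa [hfdef] using mul_le_mul_of_nonneg_left hexp hs.le
  have hmono : (∫ x in α₁..α₂, f x) ≤ ∫ x in α₁..α₂, f (x - t) := by
    apply intervalIntegral.integral_mono_on h12 (hint _ _)
      ((hcont.comp (continuous_sub_right t)).intervalIntegrable _ _) hptwise
  have hsplit1 : (∫ x in (α₁ - t)..(α₂ - t), f x) + (∫ x in (α₂ - t)..α₂, f x)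
      = ∫ x in (α₁ - t)..α₂, f x :=
    intervalIntegral.integral_add_adjacent_intervals (hint _ _) (hint _ _)
  have hsplit2 : (∫ x in (α₁ - t)..α₁, f x) + (∫ x in α₁..α₂, f x)
      = ∫ x in (α₁ - t)..α₂, f x :=
    intervalIntegral.integral_add_adjacent_intervals (hint _ _) (hint _ _)
  have hN12 : (∫ x in (α₂ - t)..α₂, f x) ≤ ∫ x in (α₁ - t)..α₁, f x := by
    have := hshift
    linarith [hmono, hsplit1, hsplit2, hshift]
  have hdiv : (∫ x in (α₂ - t)..α₂, f x) / (∫ x in (-α₂)..α₂, f x)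
      ≤ (∫ x in (α₁ - t)..α₁, f x) / (∫ x in (-α₁)..α₁, f x) :=
    div_le_div₀ hN1nonneg hN12 hD1pos hD12
  linarith [hdiv]
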